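/- For every n ≥ 1, all complex roots of the independence polynomial I(W_n,x) of the n-centipede are real (and negative). -/

import Mathlib

open Polynomial

noncomputable def indepPoly {V : Type*} [Finite V] (G : SimpleGraph V) : Polynomial ℝ :=
  haveI := Fintype.ofFinite V
  haveI := Classical.decPred fun s : Finset V => ∀ u ∈ s, ∀ v ∈ s, ¬G.Adj u v
  ∑ s ∈ Finset.univ.filter (fun s : Finset V => ∀ u ∈ s, ∀ v ∈ s, ¬G.Adj u v), X ^ s.card

/-- The `n`-centipede: a path on `n` vertices `(i, false)` with a pendant vertex
`(i, true)` attached to each path vertex. -/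
def centipede (n : ℕ) : SimpleGraph (Fin n × Bool) :=
  SimpleGraph.fromRel (fun a b =>
    (a.2 = false ∧ b.2 = false ∧ (a.1 : ℕ) + 1 = (b.1 : ℕ)) ∨
    (a.1 = b.1 ∧ a.2 = false ∧ b.2 = true))

open Finset in

/-- Independent subsets of the path on `{0, ..., n-1}`. -/
def pathIndep (n : ℕ) : Finset (Finset ℕ) :=
  (Finset.range n).powerset.filter (fun A => ∀ i ∈ A, i + 1 ∉ A)

lemma pathIndep_zero : pathIndep 0 = {∅} := by
  decide

lemma pathIndep_one : pathIndep 1 = {∅, {0}} := by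
  decide

/-- The path-sum recurrence. -/
lemma pathSum_rec (n : ℕ) (w : ℂ) :
    ∑ A ∈ pathIndep (n + 2), w ^ A.card
      = ∑ A ∈ pathIndep (n + 1), w ^ A.card + w * ∑ A ∈ pathIndep n, w ^ A.card := by
  classical
  rw [← Finset.sum_filter_add_sum_filter_not (pathIndep (n+2)) (fun A => (n+1) ∉ A)]
  congr 1
  · apply Finset.sum_congr _ (fun _ _ => rfl)
    ext A
    simp only [pathIndep, Finset.mem_filter, Finset.mem_powerset]
    constructor
    · rintro ⟨⟨hsub, hnc⟩, hnot⟩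
      refine ⟨fun i hi => ?_, hnc⟩
      have := hsub hi
      rw [Finset.mem_range] at this ⊢
      rcases Nat.lt_or_ge i (n+1) with h | h
      · exact h
      · exact absurd hi (by have : i = n + 1 := le_antisymm (Nat.lt_succ_iff.mp this) h; rw [this]; exact hnot)
    · rintro ⟨hsub, hnc⟩
      have hsub2 : A ⊆ Finset.range (n+2) := hsub.trans (by intro x; simp only [Finset.mem_range]; omega)
      exact ⟨⟨hsub2, hnc⟩, fun h => by have := hsub h; simp [Finset.mem_range] at this⟩
  · rw [Finset.mul_sum]
    refine Finset.sum_nbij' (fun A => A.erase (n+1)) (fun B => insert (n+1) B) ?_ ?_ ?_ ?_ ?_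
    · intro A hA
      simp only [pathIndep, Finset.mem_filter, Finset.mem_powerset, not_not] at hA ⊢
      obtain ⟨⟨hsub, hnc⟩, hmem⟩ := hA
      refine ⟨fun i hi => ?_, fun i hi => ?_⟩
      · have hiA := Finset.mem_of_mem_erase hi
        have hne := Finset.ne_of_mem_erase hi
        have := hsub hiA
        rw [Finset.mem_range] at this ⊢
        have hn : i ≠ n := by
          rintro rfl
          exact (hnc i hiA) hmem
        omega
      · have hiA := Finset.mem_of_mem_erase hi
        intro hcon
        exact (hnc i hiA) (Finset.mem_of_mem_erase hcon)
    · intro B hB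
      simp only [pathIndep, Finset.mem_filter, Finset.mem_powerset, not_not] at hB ⊢
      obtain ⟨hsub, hnc⟩ := hB
      refine ⟨⟨fun i hi => ?_, fun i hi => ?_⟩, Finset.mem_insert_self _ _⟩
      · rw [Finset.mem_insert] at hi
        rw [Finset.mem_range]
        rcases hi with rfl | hi
        · omega
        · have := hsub hi; rw [Finset.mem_range] at this; omega
      · rw [Finset.mem_insert] at hi
        intro hcon
        rw [Finset.mem_insert] at hcon
        rcases hi with rfl | hi
        · rcases hcon with h | h
          · omega
          · have := hsub h; rw [Finset.mem_range] at this; omega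
        · have hilt := hsub hi; rw [Finset.mem_range] at hilt
          rcases hcon with h | h
          · omega
          · exact (hnc i hi) h
    · intro A hA
      simp only [Finset.mem_filter, not_not] at hA
      exact Finset.insert_erase hA.2
    · intro B hB
      simp only [pathIndep, Finset.mem_filter, Finset.mem_powerset] at hB
      apply Finset.erase_insert
      intro hcon
      have := hB.1 hcon
      rw [Finset.mem_range] at this; omega
    · intro A hA
      simp only [Finset.mem_filter, not_not] at hA
      rw [Finset.card_erase_of_mem hA.2, ← pow_succ']
      congr 1
      have : 1 ≤ A.card := Finset.card_pos.mpr ⟨n+1, hA.2⟩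
      omega

open Finset in
lemma pathSum_closed (w α β : ℂ) (hab : α + β = 1) (hm : α * β = -w) :
    ∀ n : ℕ, (α - β) * ∑ A ∈ pathIndep n, w ^ A.card = α ^ (n + 2) - β ^ (n + 2) := by
  intro n
  induction n using Nat.twoStepInduction with
  | zero =>
    rw [pathIndep_zero]
    simp only [Finset.sum_singleton, Finset.card_empty, pow_zero]
    linear_combination (β - α) * hab
  | one =>
    rw [pathIndep_one]
    rw [Finset.sum_insert (by decide), Finset.sum_singleton]
    simp only [Finset.card_empty, pow_zero, Finset.card_singleton, pow_one]
    linear_combination (β - α) * (1 + α + β) * hab + (α - β) * hm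
  | more n IH1 IH2 =>
    rw [pathSum_rec]
    linear_combination IH2 + w * IH1 - (α ^ (n + 3) - β ^ (n + 3)) * hab
      + (α ^ (n + 2) - β ^ (n + 2)) * hm

open Finset in
lemma pathSum_root (n : ℕ) (w : ℂ) (h : ∑ A ∈ pathIndep n, w ^ A.card = 0) :
    w.im = 0 ∧ w.re < 0 := by
  by_cases h4 : (1 : ℂ) + 4 * w = 0
  · have hw : w = -(1/4 : ℂ) := by linear_combination (1/4 : ℂ) * h4
    rw [hw]
    norm_num
  · obtain ⟨s, hs⟩ := IsAlgClosed.exists_pow_nat_eq ((1 : ℂ) + 4 * w) (n := 2) two_pos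
    have hs0 : s ≠ 0 := by
      intro h0
      rw [h0] at hs
      simp at hs
      exact h4 hs.symm
    set α : ℂ := (1 + s) / 2 with hα
    set β : ℂ := (1 - s) / 2 with hβdef
    have hab : α + β = 1 := by rw [hα, hβdef]; ring
    have hm : α * β = -w := by rw [hα, hβdef]; linear_combination (-(1/4) : ℂ) * hs
    have hclosed := pathSum_closed w α β hab hm n
    rw [h, mul_zero] at hclosed
    have hpow : α ^ (n + 2) = β ^ (n + 2) := by linear_combination -hclosed
    have habs : ‖α‖ = ‖β‖ := by
      have : ‖α‖ ^ (n + 2) = ‖β‖ ^ (n + 2) := by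
        rw [← norm_pow, ← norm_pow, hpow]
      exact (pow_left_inj₀ (norm_nonneg _) (norm_nonneg _) (by omega)).mp this
    have hβ : β = 1 - α := by linear_combination hab
    have hβre : β.re = 1 - α.re := by rw [hβ]; simp
    have hβim : β.im = -α.im := by rw [hβ]; simp
    have hnsq : α.re ^ 2 + α.im ^ 2 = β.re ^ 2 + β.im ^ 2 := by
      have h1 : Complex.normSq α = Complex.normSq β := by
        rw [← Complex.sq_norm, ← Complex.sq_norm, habs]
      simpa [Complex.normSq_apply, pow_two] using h1
    have hre : α.re = 1/2 := by
      rw [hβre, hβim] at hnsq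
      nlinarith [hnsq]
    have hw : w = -(α * β) := by linear_combination hm
    constructor
    · rw [hw]
      simp [Complex.mul_im, hβim, hβre, hre]
      ring
    · rw [hw]
      simp only [Complex.neg_re, Complex.mul_re, hβim, hβre, hre]
      nlinarith [sq_nonneg α.im]

open Finset in
lemma indepPoly_centipede (n : ℕ) :
    indepPoly (centipede n)
      = ∑ A ∈ pathIndep n, X ^ A.card * ((1 : ℝ[X]) + X) ^ (n - A.card) := by
  classical
  -- adjacency facts
  have adj_ff : ∀ (i j : Fin n), (i : ℕ) + 1 = (j : ℕ) →
      (centipede n).Adj (i, false) (j, false) := by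
    intro i j hij
    rw [centipede, SimpleGraph.fromRel_adj]
    refine ⟨?_, Or.inl (Or.inl ⟨rfl, rfl, hij⟩)⟩
    intro hc
    have : (i : ℕ) = (j : ℕ) := congrArg (fun p => ((Prod.fst p : Fin n) : ℕ)) hc
    omega
  have adj_ft : ∀ i : Fin n, (centipede n).Adj (i, false) (i, true) := by
    intro i
    rw [centipede, SimpleGraph.fromRel_adj]
    exact ⟨by simp, Or.inl (Or.inr ⟨rfl, rfl, rfl⟩)⟩
  -- inner binomial identity
  have inner : ∀ S : Finset ℕ, ((1 : ℝ[X]) + X) ^ S.card = ∑ B ∈ S.powerset, X ^ B.card := by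
    intro S
    calc ((1 : ℝ[X]) + X) ^ S.card = ∏ _i ∈ S, ((X : ℝ[X]) + 1) := by
          rw [Finset.prod_const, add_comm]
      _ = ∑ B ∈ S.powerset, (∏ _i ∈ B, (X : ℝ[X])) * ∏ _i ∈ S \ B, (1 : ℝ[X]) :=
          Finset.prod_add _ _ S
      _ = ∑ B ∈ S.powerset, X ^ B.card := by
          refine Finset.sum_congr rfl fun B _ => ?_
          rw [Finset.prod_const, Finset.prod_const, one_pow, mul_one]
  have hRHS : ∑ A ∈ pathIndep n, X ^ A.card * ((1 : ℝ[X]) + X) ^ (n - A.card)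
      = ∑ σ ∈ (pathIndep n).sigma (fun A => ((Finset.range n) \ A).powerset),
          X ^ (σ.1.card + σ.2.card) := by
    rw [Finset.sum_sigma]
    refine Finset.sum_congr rfl fun A hA => ?_
    have hsub : A ⊆ Finset.range n :=
      Finset.mem_powerset.mp (Finset.mem_filter.mp hA).1
    have hcard : (Finset.range n \ A).card = n - A.card := by
      rw [Finset.card_sdiff_of_subset hsub, Finset.card_range]
    rw [← hcard, inner, Finset.mul_sum]
    exact Finset.sum_congr rfl fun B _ => by rw [pow_add]
  rw [hRHS, indepPoly]
  -- cardinality decomposition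
  have hcard : ∀ s : Finset (Fin n × Bool),
      s.card = ((s.filter fun p => p.2 = false).image (fun p => (p.1 : ℕ))).card
        + ((s.filter fun p => p.2 = true).image (fun p => (p.1 : ℕ))).card := by
    intro s
    rw [Finset.card_image_of_injOn (fun p hp q hq h => by
        simp only [Finset.coe_filter, Set.mem_setOf_eq] at hp hq
        exact Prod.ext (Fin.val_injective h) (hp.2.trans hq.2.symm)),
      Finset.card_image_of_injOn (fun p hp q hq h => by
        simp only [Finset.coe_filter, Set.mem_setOf_eq] at hp hq
        exact Prod.ext (Fin.val_injective h) (hp.2.trans hq.2.symm))]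
    have : (s.filter fun p => p.2 = true) = (s.filter fun p => ¬ p.2 = false) :=
      Finset.filter_congr (fun x _ => by cases h : x.2 <;> simp [h])
    rw [this, Finset.card_filter_add_card_filter_not]
  refine Finset.sum_nbij'
    (fun s => (⟨(s.filter fun p => p.2 = false).image (fun p => (p.1 : ℕ)),
        (s.filter fun p => p.2 = true).image (fun p => (p.1 : ℕ))⟩ :
        Σ _ : Finset ℕ, Finset ℕ))
    (fun σ => Finset.univ.filter
      (fun p : Fin n × Bool => if p.2 = true then (p.1 : ℕ) ∈ σ.2 else (p.1 : ℕ) ∈ σ.1))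
    ?_ ?_ ?_ ?_ ?_
  · -- maps into the sigma set
    intro s hs
    simp only [Finset.mem_filter] at hs
    have hind : ∀ u ∈ s, ∀ v ∈ s, ¬(centipede n).Adj u v := hs.2
    rw [Finset.mem_sigma]
    constructor
    · rw [pathIndep, Finset.mem_filter, Finset.mem_powerset]
      constructor
      · intro i hi
        simp only [Finset.mem_image, Finset.mem_filter] at hi
        obtain ⟨p, ⟨_, _⟩, hp⟩ := hi
        rw [Finset.mem_range, ← hp]
        exact p.1.isLt
      · intro i hi hcon
        simp only [Finset.mem_image, Finset.mem_filter] at hi hcon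
        obtain ⟨⟨p1, p2⟩, ⟨hps, hp2⟩, hp⟩ := hi
        obtain ⟨⟨q1, q2⟩, ⟨hqs, hq2⟩, hq⟩ := hcon
        simp only at hp hq hp2 hq2
        subst hp2 hq2
        exact hind _ hps _ hqs (adj_ff p1 q1 (by omega))
    · rw [Finset.mem_powerset]
      intro i hi
      simp only [Finset.mem_image, Finset.mem_filter] at hi
      obtain ⟨⟨p1, p2⟩, ⟨hps, hp2⟩, hp⟩ := hi
      simp only at hp hp2
      subst hp2
      rw [Finset.mem_sdiff, Finset.mem_range]
      constructor
      · rw [← hp]; exact p1.isLt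
      · intro hcon
        simp only [Finset.mem_image, Finset.mem_filter] at hcon
        obtain ⟨⟨q1, q2⟩, ⟨hqs, hq2⟩, hq⟩ := hcon
        simp only at hq hq2
        subst hq2
        have hq1 : q1 = p1 := Fin.val_injective (by omega)
        subst hq1
        exact hind _ hqs _ hps (adj_ft q1)
  · -- reverse maps into the filter
    intro σ hσ
    rw [Finset.mem_sigma] at hσ
    obtain ⟨hA, hB⟩ := hσ
    rw [pathIndep, Finset.mem_filter, Finset.mem_powerset] at hA
    rw [Finset.mem_powerset] at hB
    simp only [Finset.mem_filter, Finset.mem_univ, true_and]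
    intro u hu v hv hadj
    rw [centipede, SimpleGraph.fromRel_adj] at hadj
    obtain ⟨hne, hr | hr⟩ := hadj
    · rcases hr with ⟨hu2, hv2, hcons⟩ | ⟨h1, hu2, hv2⟩
      · rw [hu2] at hu; rw [hv2] at hv
        simp only [Bool.false_eq_true, if_false] at hu hv
        exact hA.2 _ hu (by rw [hcons]; exact hv)
      · rw [hu2] at hu; rw [hv2] at hv
        simp only [Bool.false_eq_true, if_false, if_true] at hu hv
        have := Finset.mem_sdiff.mp (hB hv)
        rw [← h1] at this
        exact this.2 hu
    · rcases hr with ⟨hv2, hu2, hcons⟩ | ⟨h1, hv2, hu2⟩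
      · rw [hu2] at hu; rw [hv2] at hv
        simp only [Bool.false_eq_true, if_false] at hu hv
        exact hA.2 _ hv (by rw [hcons]; exact hu)
      · rw [hu2] at hu; rw [hv2] at hv
        simp only [Bool.false_eq_true, if_false, if_true] at hu hv
        have := Finset.mem_sdiff.mp (hB hu)
        rw [← h1] at this
        exact this.2 hv
  · -- left inverse
    intro s _
    ext ⟨i, b⟩
    simp only [Finset.mem_filter, Finset.mem_univ, true_and]
    cases b
    · simp only [Bool.false_eq_true, if_false, Finset.mem_image, Finset.mem_filter]
      constructor
      · rintro ⟨⟨p1, p2⟩, ⟨hps, hp2⟩, hp⟩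
        simp only at hp hp2
        subst hp2
        have : p1 = i := Fin.val_injective hp
        subst this
        exact hps
      · intro h
        exact ⟨(i, false), ⟨h, rfl⟩, rfl⟩
    · simp only [if_true, Finset.mem_image, Finset.mem_filter]
      constructor
      · rintro ⟨⟨p1, p2⟩, ⟨hps, hp2⟩, hp⟩
        simp only at hp hp2
        subst hp2
        have : p1 = i := Fin.val_injective hp
        subst this
        exact hps
      · intro h
        exact ⟨(i, true), ⟨h, rfl⟩, rfl⟩
  · -- right inverse
    rintro ⟨A, B⟩ hσ
    rw [Finset.mem_sigma] at hσ
    obtain ⟨hA, hB⟩ := hσ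
    rw [pathIndep, Finset.mem_filter, Finset.mem_powerset] at hA
    rw [Finset.mem_powerset] at hB
    have h1 : ((Finset.univ.filter
        (fun p : Fin n × Bool => if p.2 = true then (p.1 : ℕ) ∈ B else (p.1 : ℕ) ∈ A)).filter
          (fun p => p.2 = false)).image (fun p => (p.1 : ℕ)) = A := by
      ext i
      simp only [Finset.mem_image, Finset.mem_filter, Finset.mem_univ, true_and]
      constructor
      · rintro ⟨⟨p1, p2⟩, ⟨hmem, hp2⟩, hp⟩
        simp only at hp hp2
        subst hp2
        simp only [Bool.false_eq_true, if_false] at hmem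
        rw [← hp]; exact hmem
      · intro hi
        have hilt : i < n := Finset.mem_range.mp (hA.1 hi)
        exact ⟨(⟨i, hilt⟩, false), ⟨by simp [hi], rfl⟩, rfl⟩
    have h2 : ((Finset.univ.filter
        (fun p : Fin n × Bool => if p.2 = true then (p.1 : ℕ) ∈ B else (p.1 : ℕ) ∈ A)).filter
          (fun p => p.2 = true)).image (fun p => (p.1 : ℕ)) = B := by
      ext i
      simp only [Finset.mem_image, Finset.mem_filter, Finset.mem_univ, true_and]
      constructor
      · rintro ⟨⟨p1, p2⟩, ⟨hmem, hp2⟩, hp⟩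
        simp only at hp hp2
        subst hp2
        simp only [if_true] at hmem
        rw [← hp]; exact hmem
      · intro hi
        have hilt : i < n := Finset.mem_range.mp (Finset.mem_sdiff.mp (hB hi)).1
        exact ⟨(⟨i, hilt⟩, true), ⟨by simp [hi], rfl⟩, rfl⟩
    exact Sigma.ext h1 (heq_of_eq h2)
  · -- values agree
    intro s _
    rw [hcard s]

open Finset in
theorem centipede_real_rooted (n : ℕ) (hn : 1 ≤ n) (z : ℂ)
    (hz : ((indepPoly (centipede n)).map (algebraMap ℝ ℂ)).IsRoot z) :
    z.im = 0 ∧ z.re < 0 := by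
  rw [Polynomial.IsRoot, indepPoly_centipede n] at hz
  simp only [Polynomial.map_sum, Polynomial.map_mul, Polynomial.map_pow, Polynomial.map_add,
    Polynomial.map_one, Polynomial.map_X, Polynomial.eval_finset_sum, Polynomial.eval_mul,
    Polynomial.eval_pow, Polynomial.eval_add, Polynomial.eval_one, Polynomial.eval_X] at hz
  by_cases hz1 : z = -1
  · subst hz1
    constructor
    · simp
    · simp only [Complex.neg_re, Complex.one_re]
      norm_num
  · have h1z : (1 : ℂ) + z ≠ 0 := by
      intro h
      exact hz1 (by linear_combination h)
    set w : ℂ := z / (1 + z) with hw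
    have hfactor : ∑ A ∈ pathIndep n, z ^ A.card * (1 + z) ^ (n - A.card)
        = (1 + z) ^ n * ∑ A ∈ pathIndep n, w ^ A.card := by
      rw [Finset.mul_sum]
      refine Finset.sum_congr rfl fun A hA => ?_
      have hle : A.card ≤ n := by
        have hsub : A ⊆ Finset.range n :=
          Finset.mem_powerset.mp (Finset.mem_filter.mp hA).1
        simpa using Finset.card_le_card hsub
      have hsplit : (1 + z) ^ n = (1 + z) ^ A.card * (1 + z) ^ (n - A.card) := by
        rw [← pow_add]
        congr 1
        omega
      rw [hsplit, hw, div_pow]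
      field_simp
    rw [hfactor] at hz
    have hsum : ∑ A ∈ pathIndep n, w ^ A.card = 0 :=
      (mul_eq_zero.mp hz).resolve_left (pow_ne_zero n h1z)
    obtain ⟨him, hre⟩ := pathSum_root n w hsum
    set c : ℝ := w.re with hc
    have hwc : w = (c : ℂ) := Complex.ext (by simp [hc]) (by simp [him])
    have hzw : z * (1 - w) = w := by
      rw [hw]
      field_simp
      ring
    have h1c : (1 : ℂ) - (c : ℂ) ≠ 0 := by
      intro h
      have : (1 : ℝ) - c = 0 := by
        have := congrArg Complex.re h
        simpa using this
      linarith
    have hz_eq : z = ((c / (1 - c) : ℝ) : ℂ) := by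
      rw [hwc] at hzw
      push_cast
      rw [eq_div_iff h1c]
      linear_combination hzw
    constructor
    · rw [hz_eq]
      exact Complex.ofReal_im _
    · rw [hz_eq, Complex.ofReal_re]
      exact div_neg_of_neg_of_pos hre (by linarith)
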